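/- arXiv:2008.03185 — 7 statements merged into one kernel-verified Lean document; each statement's English description precedes it below -/
import Mathlib

section
/- Let 2 ≤ k ≤ N−1. Assume the step ratios satisfy 0 < r_i < (3+√17)/2 for 2 ≤ i ≤ N. Then for any real numbers w_{k−1}, w_k one has 2 w_k · Σ_{j=1}^{k} b_{k−j}^{(k)} w_j ≥ r_{k+1}/((1+r_{k+1}) τ_k) · w_k² − r_k/((1+r_k) τ_{k−1}) · w_{k−1}² + ( (2+4r_k−r_k²)/(1+r_k) − r_{k+1}/(1+r_{k+1}) ) · w_k²/τ_k, where the left-hand sum equals b_0^{(k)} w_k + b_1^{(k)} w_{k−1}. -/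
open Finset

/-- BDF2 kernels `b_j^{(n)}` (assuming `r 1 = 0`, so the `n = 1` case
`b_0^{(1)} = 1/τ_1` is subsumed by the general formula). -/
noncomputable def bk (τ r : ℕ → ℝ) (n j : ℕ) : ℝ :=
  if j = 0 then (1 + 2 * r n) / (τ n * (1 + r n))
  else if j = 1 then -(r n) ^ 2 / (τ n * (1 + r n))
  else 0

theorem stmt0 (N : ℕ) (τ r : ℕ → ℝ)
    (hτ : ∀ k, 1 ≤ k → k ≤ N → 0 < τ k)
    (hr1 : r 1 = 0)
    (hr : ∀ k, 2 ≤ k → k ≤ N → r k = τ k / τ (k - 1))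
    (hratio : ∀ i, 2 ≤ i → i ≤ N → 0 < r i ∧ r i < (3 + Real.sqrt 17) / 2)
    (k : ℕ) (hk2 : 2 ≤ k) (hkN : k + 1 ≤ N)
    (w : ℕ → ℝ) :
    2 * w k * (∑ j ∈ Finset.Icc 1 k, bk τ r k (k - j) * w j) ≥
      r (k + 1) / ((1 + r (k + 1)) * τ k) * (w k) ^ 2
        - r k / ((1 + r k) * τ (k - 1)) * (w (k - 1)) ^ 2
        + ((2 + 4 * r k - (r k) ^ 2) / (1 + r k)
            - r (k + 1) / (1 + r (k + 1))) * (w k) ^ 2 / τ k := by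
  have hτk : 0 < τ k := hτ k (by omega) (by omega)
  have hτk1 : 0 < τ (k - 1) := hτ (k - 1) (by omega) (by omega)
  have hrk : 0 < r k := (hratio k hk2 (by omega)).1
  have hrk1 : 0 < r (k + 1) := (hratio (k + 1) (by omega) hkN).1
  have hreq : r k * τ (k - 1) = τ k := by
    rw [hr k hk2 (by omega)]
    field_simp
  have hsum : ∑ j ∈ Finset.Icc 1 k, bk τ r k (k - j) * w j
      = bk τ r k 1 * w (k - 1) + bk τ r k 0 * w k := by
    have hsub : ({k - 1, k} : Finset ℕ) ⊆ Finset.Icc 1 k := by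
      intro x hx
      simp only [Finset.mem_insert, Finset.mem_singleton] at hx
      rw [Finset.mem_Icc]
      omega
    rw [← Finset.sum_subset hsub]
    · rw [Finset.sum_pair (show k - 1 ≠ k by omega)]
      have h1 : k - (k - 1) = 1 := by omega
      have h0 : k - k = 0 := by omega
      rw [h1, h0]
    · intro x hx hx'
      simp only [Finset.mem_insert, Finset.mem_singleton, not_or] at hx'
      rw [Finset.mem_Icc] at hx
      have h2 : k - x ≠ 0 := by omega
      have h3 : k - x ≠ 1 := by omega
      simp [bk, h2, h3]
  rw [hsum]
  norm_num [bk]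
  rw [← sub_nonneg]
  have hkey : 2 * w k * (-(r k) ^ 2 / (τ k * (1 + r k)) * w (k - 1)
        + (1 + 2 * r k) / (τ k * (1 + r k)) * w k)
      - (r (k + 1) / ((1 + r (k + 1)) * τ k) * (w k) ^ 2
        - r k / ((1 + r k) * τ (k - 1)) * (w (k - 1)) ^ 2
        + ((2 + 4 * r k - (r k) ^ 2) / (1 + r k)
            - r (k + 1) / (1 + r (k + 1))) * (w k) ^ 2 / τ k)
      = (r k) ^ 2 * (w k - w (k - 1)) ^ 2 / ((1 + r k) * τ k) := by
    have hτk1' : τ (k - 1) = τ k / r k := by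
      field_simp [hrk.ne'] at hreq ⊢
      linarith [hreq]
    rw [hτk1']
    field_simp
    ring
  rw [hkey]
  positivity
end

section
/- Let 2 ≤ n ≤ N−1 and assume the step ratios satisfy 0 < r_k < (3+√17)/2 for 2 ≤ k ≤ N. Then for any real numbers w_1, …, w_n, not all zero, one has Σ_{k=1}^{n} w_k Σ_{j=1}^{k} b_{k−j}^{(k)} w_j ≥ (1/2) Σ_{k=1}^{n} ( (2+4r_k−r_k²)/(1+r_k) − r_{k+1}/(1+r_{k+1}) ) · w_k²/τ_k > 0; in particular the BDF2 kernels are positive definite. -/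
open Finset

lemma aux_coeff_pos (s a b : ℝ) (hs2 : s^2 = 17) (hs4 : 4 < s)
    (ha0 : 0 ≤ a) (ha : a < (3+s)/2) (hb0 : 0 ≤ b) (hb : b < (3+s)/2) :
    0 < (2 + 4*a - a^2)/(1+a) - b/(1+b) := by
  have h1a : (0:ℝ) < 1 + a := by linarith
  have h1b : (0:ℝ) < 1 + b := by linarith
  rw [sub_pos, div_lt_div_iff₀ h1b h1a]
  rcases le_or_gt 0 (1 + 3*a - a^2) with h | h
  · nlinarith [mul_nonneg hb0 h, sq_nonneg (a-2)]
  · nlinarith [mul_pos (show (0:ℝ) < (3+s)/2 - b by linarith) (show (0:ℝ) < a^2 - 3*a - 1 by linarith),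
      mul_nonneg (mul_nonneg (show (0:ℝ) ≤ (3+s)/2 - a by linarith) ha0) (show (0:ℝ) ≤ 1 + (3+s)/2 by linarith),
      mul_nonneg (show (0:ℝ) ≤ (3+s)/2 - a by linarith) (show (0:ℝ) ≤ (3+s)/2 - 2 by linarith)]

lemma aux_inner (τ r : ℕ → ℝ) (w : ℕ → ℝ) (k : ℕ) (hk : 2 ≤ k) :
    ∑ j ∈ Finset.Icc 1 k, bk τ r k (k - j) * w j
      = bk τ r k 0 * w k + bk τ r k 1 * w (k-1) := by
  obtain ⟨m, rfl⟩ : ∃ m, k = m + 2 := ⟨k - 2, by omega⟩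
  rw [show m + 2 = (m+1) + 1 from rfl, Finset.sum_Icc_succ_top (by omega),
    Finset.sum_Icc_succ_top (by omega)]
  have h0 : ∑ j ∈ Finset.Icc 1 m, bk τ r (m+1+1) (m+1+1 - j) * w j = 0 := by
    apply Finset.sum_eq_zero
    intro j hj
    simp only [Finset.mem_Icc] at hj
    have h1 : m+1+1 - j ≠ 0 := by omega
    have h2 : m+1+1 - j ≠ 1 := by omega
    simp [bk, h1, h2]
  rw [h0]
  have : m+1+1 - (m+1) = 1 := by omega
  rw [this]
  simp
  ring

lemma aux_key (N : ℕ) (τ r : ℕ → ℝ)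
    (hτ : ∀ k, 1 ≤ k → k ≤ N → 0 < τ k)
    (hr1 : r 1 = 0)
    (hr : ∀ k, 2 ≤ k → k ≤ N → r k = τ k / τ (k - 1))
    (hratio : ∀ k, 2 ≤ k → k ≤ N → 0 < r k ∧ r k < (3 + Real.sqrt 17) / 2)
    (w : ℕ → ℝ) :
    ∀ n, 1 ≤ n → n + 1 ≤ N →
      (∑ k ∈ Finset.Icc 1 n, w k * ∑ j ∈ Finset.Icc 1 k, bk τ r k (k - j) * w j)
        ≥ (1 / 2) * ∑ k ∈ Finset.Icc 1 n,
            ((2 + 4 * r k - (r k) ^ 2) / (1 + r k) - r (k + 1) / (1 + r (k + 1))) * (w k) ^ 2 / τ k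
          + (r (n+1))^2 / (2 * τ (n+1) * (1 + r (n+1))) * (w n)^2 := by
  intro n hn
  induction n, hn using Nat.le_induction with
  | base =>
    intro hN
    have hτ1 : 0 < τ 1 := hτ 1 le_rfl (by omega)
    have hτ2 : 0 < τ 2 := hτ 2 (by omega) hN
    have hr2 : 0 < r 2 := (hratio 2 le_rfl hN).1
    have hτ2eq : τ 2 = r 2 * τ 1 := by
      rw [hr 2 le_rfl hN]; field_simp
    have h1r2 : (0:ℝ) < 1 + r 2 := by linarith
    simp only [Finset.Icc_self, Finset.sum_singleton]
    apply ge_of_eq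
    have : (1:ℕ) - 1 = 0 := rfl
    rw [this]
    simp only [bk, if_pos rfl, hr1, hτ2eq, ↓reduceIte]
    field_simp
    ring
  | succ n hn ih =>
    intro hN
    have ih' := ih (by omega)
    have hτn1 : 0 < τ (n+1) := hτ (n+1) (by omega) (by omega)
    have hτn2 : 0 < τ (n+2) := hτ (n+2) (by omega) (by omega)
    have hrn1 : 0 < r (n+1) := (hratio (n+1) (by omega) (by omega)).1
    have hrn2 : 0 < r (n+2) := (hratio (n+2) (by omega) (by omega)).1
    have hτeq : τ (n+2) = r (n+2) * τ (n+1) := by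
      have := hr (n+2) (by omega) (by omega)
      rw [show n+2-1 = n+1 from rfl] at this
      rw [this]; field_simp
    have h1a : (0:ℝ) < 1 + r (n+1) := by linarith
    have h1b : (0:ℝ) < 1 + r (n+2) := by linarith
    have hsplitL : ∑ k ∈ Finset.Icc 1 (n+1), w k * ∑ j ∈ Finset.Icc 1 k, bk τ r k (k - j) * w j
        = (∑ k ∈ Finset.Icc 1 n, w k * ∑ j ∈ Finset.Icc 1 k, bk τ r k (k - j) * w j)
          + w (n+1) * ∑ j ∈ Finset.Icc 1 (n+1), bk τ r (n+1) (n+1 - j) * w j :=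
      Finset.sum_Icc_succ_top (by omega) _
    have hsplitR : ∑ k ∈ Finset.Icc 1 (n+1),
          ((2 + 4 * r k - (r k)^2) / (1 + r k) - r (k+1) / (1 + r (k+1))) * (w k)^2 / τ k
        = (∑ k ∈ Finset.Icc 1 n,
            ((2 + 4 * r k - (r k)^2) / (1 + r k) - r (k+1) / (1 + r (k+1))) * (w k)^2 / τ k)
          + ((2 + 4 * r (n+1) - (r (n+1))^2) / (1 + r (n+1))
              - r (n+1+1) / (1 + r (n+1+1))) * (w (n+1))^2 / τ (n+1) :=
      Finset.sum_Icc_succ_top (by omega) _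
    rw [hsplitL, hsplitR, aux_inner τ r w (n+1) (by omega)]
    have hstep :
        w (n+1) * (bk τ r (n+1) 0 * w (n+1) + bk τ r (n+1) 1 * w (n+1-1))
          + (r (n+1))^2 / (2 * τ (n+1) * (1 + r (n+1))) * (w n)^2
        ≥ (1/2) * (((2 + 4 * r (n+1) - (r (n+1))^2) / (1 + r (n+1))
              - r (n+2) / (1 + r (n+2))) * (w (n+1))^2 / τ (n+1))
          + (r (n+2))^2 / (2 * τ (n+2) * (1 + r (n+2))) * (w (n+1))^2 := by
      rw [ge_iff_le, ← sub_nonneg]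
      have heq :
          w (n+1) * (bk τ r (n+1) 0 * w (n+1) + bk τ r (n+1) 1 * w (n+1-1))
            + (r (n+1))^2 / (2 * τ (n+1) * (1 + r (n+1))) * (w n)^2
          - ((1/2) * (((2 + 4 * r (n+1) - (r (n+1))^2) / (1 + r (n+1))
              - r (n+2) / (1 + r (n+2))) * (w (n+1))^2 / τ (n+1))
            + (r (n+2))^2 / (2 * τ (n+2) * (1 + r (n+2))) * (w (n+1))^2)
          = (r (n+1))^2 / (2 * τ (n+1) * (1 + r (n+1))) * (w (n+1) - w n)^2 := by
        simp only [bk, if_pos rfl, show (1:ℕ) ≠ 0 by decide, if_neg, if_pos rfl,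
          show n+1-1 = n from rfl, hτeq, ↓reduceIte]
        field_simp
        ring
      rw [heq]
      positivity
    calc ∑ k ∈ Finset.Icc 1 n, w k * ∑ j ∈ Finset.Icc 1 k, bk τ r k (k - j) * w j
          + w (n+1) * (bk τ r (n+1) 0 * w (n+1) + bk τ r (n+1) 1 * w (n+1-1))
        ≥ ((1/2) * ∑ k ∈ Finset.Icc 1 n,
            ((2 + 4 * r k - (r k)^2) / (1 + r k) - r (k+1) / (1 + r (k+1))) * (w k)^2 / τ k
          + (r (n+1))^2 / (2 * τ (n+1) * (1 + r (n+1))) * (w n)^2)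
          + w (n+1) * (bk τ r (n+1) 0 * w (n+1) + bk τ r (n+1) 1 * w (n+1-1)) := by
          linarith [ih']
      _ ≥ (1/2) * ∑ k ∈ Finset.Icc 1 n,
            ((2 + 4 * r k - (r k)^2) / (1 + r k) - r (k+1) / (1 + r (k+1))) * (w k)^2 / τ k
          + ((1/2) * (((2 + 4 * r (n+1) - (r (n+1))^2) / (1 + r (n+1))
              - r (n+2) / (1 + r (n+2))) * (w (n+1))^2 / τ (n+1))
            + (r (n+2))^2 / (2 * τ (n+2) * (1 + r (n+2))) * (w (n+1))^2) := by
          linarith [hstep]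
      _ = (1/2) * (∑ k ∈ Finset.Icc 1 n,
            ((2 + 4 * r k - (r k)^2) / (1 + r k) - r (k+1) / (1 + r (k+1))) * (w k)^2 / τ k
          + ((2 + 4 * r (n+1) - (r (n+1))^2) / (1 + r (n+1))
              - r (n+1+1) / (1 + r (n+1+1))) * (w (n+1))^2 / τ (n+1))
          + (r (n+1+1))^2 / (2 * τ (n+1+1) * (1 + r (n+1+1))) * (w (n+1))^2 := by
          ring

theorem stmt1 (N : ℕ) (τ r : ℕ → ℝ)
    (hτ : ∀ k, 1 ≤ k → k ≤ N → 0 < τ k)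
    (hr1 : r 1 = 0)
    (hr : ∀ k, 2 ≤ k → k ≤ N → r k = τ k / τ (k - 1))
    (hratio : ∀ k, 2 ≤ k → k ≤ N → 0 < r k ∧ r k < (3 + Real.sqrt 17) / 2)
    (n : ℕ) (hn2 : 2 ≤ n) (hnN : n + 1 ≤ N)
    (w : ℕ → ℝ) (hw : ∃ k ∈ Finset.Icc 1 n, w k ≠ 0) :
    (∑ k ∈ Finset.Icc 1 n, w k * ∑ j ∈ Finset.Icc 1 k, bk τ r k (k - j) * w j) ≥
      (1 / 2) * ∑ k ∈ Finset.Icc 1 n,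
        ((2 + 4 * r k - (r k) ^ 2) / (1 + r k)
          - r (k + 1) / (1 + r (k + 1))) * (w k) ^ 2 / τ k
    ∧ 0 < (1 / 2) * ∑ k ∈ Finset.Icc 1 n,
        ((2 + 4 * r k - (r k) ^ 2) / (1 + r k)
          - r (k + 1) / (1 + r (k + 1))) * (w k) ^ 2 / τ k := by
  have hs2 : (Real.sqrt 17)^2 = 17 := Real.sq_sqrt (by norm_num)
  have hs4 : (4:ℝ) < Real.sqrt 17 := by
    nlinarith [Real.sqrt_nonneg 17, hs2]
  constructor
  · have hk := aux_key N τ r hτ hr1 hr hratio w n (by omega) hnN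
    have hτn1 : 0 < τ (n+1) := hτ (n+1) (by omega) hnN
    have hrn1 : 0 < r (n+1) := (hratio (n+1) (by omega) hnN).1
    have h1a : (0:ℝ) < 1 + r (n+1) := by linarith
    have hA : 0 ≤ (r (n+1))^2 / (2 * τ (n+1) * (1 + r (n+1))) * (w n)^2 := by positivity
    linarith [hk]
  · rw [mul_pos_iff_of_pos_left (by norm_num : (0:ℝ) < 1/2)]
    obtain ⟨k0, hk0, hwk0⟩ := hw
    have hcoeff : ∀ k ∈ Finset.Icc 1 n,
        0 < (2 + 4 * r k - (r k)^2) / (1 + r k) - r (k+1) / (1 + r (k+1)) := by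
      intro k hk
      simp only [Finset.mem_Icc] at hk
      have hb := hratio (k+1) (by omega) (by omega)
      rcases eq_or_lt_of_le hk.1 with h1 | h1
      · have : k = 1 := h1.symm
        subst this
        have := aux_coeff_pos (Real.sqrt 17) (r 1) (r 2) hs2 hs4 (le_of_eq hr1.symm)
          (by rw [hr1]; linarith) hb.1.le hb.2
        exact this
      · have ha := hratio k (by omega) (by omega)
        exact aux_coeff_pos (Real.sqrt 17) (r k) (r (k+1)) hs2 hs4 ha.1.le ha.2 hb.1.le hb.2
    apply Finset.sum_pos'
    · intro k hk
      have hc := hcoeff k hk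
      simp only [Finset.mem_Icc] at hk
      have hτk : 0 < τ k := hτ k hk.1 (by omega)
      positivity
    · refine ⟨k0, hk0, ?_⟩
      have hc := hcoeff k0 hk0
      simp only [Finset.mem_Icc] at hk0
      have hτk : 0 < τ k0 := hτ k0 hk0.1 (by omega)
      positivity
end

section
/- For every 1 ≤ n ≤ N and every sequence of real numbers v^0, v^1, …, v^n, one has Σ_{j=1}^{n} θ_{n−j}^{(n)} D_2 v^j = v^n − v^{n−1}, where D_2 v^j := Σ_{k=1}^{j} b_{j−k}^{(j)} (v^k − v^{k−1}) is the variable-step BDF2 formula. -/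
open Finset

/-- DOC kernels: `th τ r n m = θ_m^{(n)}`, i.e. `θ_{n-k}^{(n)}` with `m = n - k`. -/
noncomputable def th (τ r : ℕ → ℝ) (n : ℕ) : ℕ → ℝ
  | 0 => 1 / bk τ r n 0
  | m + 1 => -(1 / bk τ r (n - (m + 1)) 0) *
      ∑ i ∈ (Finset.range (m + 1)).attach,
        th τ r n i.1 * bk τ r (n - i.1) (m + 1 - i.1)
  decreasing_by exact Finset.mem_range.mp i.2

/-- The variable-step BDF2 formula `D_2 v^j := Σ_{k=1}^{j} b_{j-k}^{(j)} (v^k − v^{k-1})`. -/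
noncomputable def D2 (τ r : ℕ → ℝ) (v : ℕ → ℝ) (j : ℕ) : ℝ :=
  ∑ k ∈ Finset.Icc 1 j, bk τ r j (j - k) * (v k - v (k - 1))

lemma b0_ne (N : ℕ) (τ r : ℕ → ℝ)
    (hτ : ∀ k, 1 ≤ k → k ≤ N → 0 < τ k)
    (hr1 : r 1 = 0)
    (hr : ∀ k, 2 ≤ k → k ≤ N → r k = τ k / τ (k - 1))
    (k : ℕ) (hk1 : 1 ≤ k) (hkN : k ≤ N) : bk τ r k 0 ≠ 0 := by
  have hrk : 0 ≤ r k := by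
    rcases eq_or_lt_of_le hk1 with h | h
    · rw [← h, hr1]
    · have h2 : 2 ≤ k := h
      rw [hr k h2 hkN]
      have h1 : 0 < τ k := hτ k hk1 hkN
      have h2 : 0 < τ (k - 1) := hτ (k - 1) (by omega) (by omega)
      positivity
  have hτk : 0 < τ k := hτ k hk1 hkN
  simp only [bk, if_pos rfl]
  have hnum : (0:ℝ) < 1 + 2 * r k := by linarith
  have hden : (0:ℝ) < τ k * (1 + r k) := by
    apply mul_pos hτk; linarith
  exact ne_of_gt (div_pos hnum hden)

/-- Orthogonality of DOC kernels against BDF kernels. -/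
lemma doc_orth (N : ℕ) (τ r : ℕ → ℝ)
    (hτ : ∀ k, 1 ≤ k → k ≤ N → 0 < τ k)
    (hr1 : r 1 = 0)
    (hr : ∀ k, 2 ≤ k → k ≤ N → r k = τ k / τ (k - 1))
    (n : ℕ) (hnN : n ≤ N)
    (k : ℕ) (hk1 : 1 ≤ k) (hkn : k ≤ n) :
    ∑ j ∈ Finset.Icc k n, th τ r n (n - j) * bk τ r j (j - k) =
      if k = n then 1 else 0 := by
  by_cases hk : k = n
  · subst hk
    rw [if_pos rfl, Finset.Icc_self, Finset.sum_singleton]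
    have h0 : k - k = 0 := by omega
    rw [h0]
    show th τ r k 0 * bk τ r k 0 = 1
    rw [th]
    exact one_div_mul_cancel (b0_ne N τ r hτ hr1 hr k hk1 (le_trans hkn hnN))
  · rw [if_neg hk]
    have hklt : k < n := lt_of_le_of_ne hkn hk
    -- split off j = k
    have hsplit : Finset.Icc k n = insert k (Finset.Ioc k n) := by
      rw [Finset.Ioc_insert_left hkn]
    rw [hsplit, Finset.sum_insert (by simp)]
    have h0 : k - k = 0 := by omega
    rw [h0]
    set m := n - k - 1 with hm
    have hmk : n - k = m + 1 := by omega
    have hb0 : bk τ r k 0 ≠ 0 := b0_ne N τ r hτ hr1 hr k hk1 (le_trans hkn hnN)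
    have hth : th τ r n (n - k) = -(1 / bk τ r k 0) *
        ∑ i ∈ Finset.range (m + 1), th τ r n i * bk τ r (n - i) (m + 1 - i) := by
      rw [hmk, th]
      have : n - (m + 1) = k := by omega
      rw [this]
      congr 1
      exact Finset.sum_attach (Finset.range (m + 1)) (fun i => th τ r n i * bk τ r (n - i) (m + 1 - i))
    have hsum : ∑ j ∈ Finset.Ioc k n, th τ r n (n - j) * bk τ r j (j - k) =
        ∑ i ∈ Finset.range (m + 1), th τ r n i * bk τ r (n - i) (m + 1 - i) := by
      apply Finset.sum_bij' (fun j _ => n - j) (fun i _ => n - i)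
      · intro j hj
        simp only [Finset.mem_Ioc] at hj
        simp only [Finset.mem_range]
        omega
      · intro i hi
        simp only [Finset.mem_range] at hi
        simp only [Finset.mem_Ioc]
        omega
      · intro j hj
        simp only [Finset.mem_Ioc] at hj
        omega
      · intro i hi
        simp only [Finset.mem_range] at hi
        omega
      · intro j hj
        simp only [Finset.mem_Ioc] at hj
        have h1 : n - (n - j) = j := by omega
        have h2 : m + 1 - (n - j) = j - k := by omega
        rw [h1, h2]
    rw [hsum, hth]
    field_simp
    ring

theorem stmt3 (N : ℕ) (τ r : ℕ → ℝ)
    (hτ : ∀ k, 1 ≤ k → k ≤ N → 0 < τ k)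
    (hr1 : r 1 = 0)
    (hr : ∀ k, 2 ≤ k → k ≤ N → r k = τ k / τ (k - 1))
    (n : ℕ) (hn1 : 1 ≤ n) (hnN : n ≤ N) (v : ℕ → ℝ) :
    ∑ j ∈ Finset.Icc 1 n, th τ r n (n - j) * D2 τ r v j = v n - v (n - 1) := by
  simp only [D2, Finset.mul_sum]
  have hswap : ∑ j ∈ Finset.Icc 1 n, ∑ k ∈ Finset.Icc 1 j,
        th τ r n (n - j) * (bk τ r j (j - k) * (v k - v (k - 1))) =
      ∑ k ∈ Finset.Icc 1 n, ∑ j ∈ Finset.Icc k n,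
        th τ r n (n - j) * (bk τ r j (j - k) * (v k - v (k - 1))) := by
    rw [Finset.sum_sigma', Finset.sum_sigma']
    apply Finset.sum_bij' (fun p _ => (⟨p.2, p.1⟩ : Σ _ : ℕ, ℕ))
      (fun p _ => (⟨p.2, p.1⟩ : Σ _ : ℕ, ℕ))
    · intro p hp
      simp only [Finset.mem_sigma, Finset.mem_Icc] at hp ⊢
      omega
    · intro p hp
      simp only [Finset.mem_sigma, Finset.mem_Icc] at hp ⊢
      omega
    · intro p _; rfl
    · intro p _; rfl
    · intro p _; rfl
  rw [hswap]
  have hinner : ∀ k ∈ Finset.Icc 1 n,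
      ∑ j ∈ Finset.Icc k n, th τ r n (n - j) * (bk τ r j (j - k) * (v k - v (k - 1))) =
      (if k = n then 1 else 0) * (v k - v (k - 1)) := by
    intro k hk
    simp only [Finset.mem_Icc] at hk
    rw [← doc_orth N τ r hτ hr1 hr n hnN k hk.1 hk.2, Finset.sum_mul]
    congr 1; ext j; ring
  rw [Finset.sum_congr rfl hinner]
  simp only [ite_mul, one_mul, zero_mul]
  rw [Finset.sum_ite_eq' (Finset.Icc 1 n) n (fun k => v k - v (k - 1))]
  simp [hn1]
end

section
/- Assume the step ratios satisfy 0 < r_k < (3+√17)/2 for 2 ≤ k ≤ N. Then for every 1 ≤ j ≤ n ≤ N, the DOC kernel θ_{n−j}^{(n)} is positive and admits the explicit representation θ_{n−j}^{(n)} = (1/b_0^{(j)}) · Π_{i=j+1}^{n} r_i²/(1+2r_i). -/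
open Finset

lemma bk_ge_two (τ r : ℕ → ℝ) (n j : ℕ) (h : 2 ≤ j) : bk τ r n j = 0 := by
  unfold bk
  rw [if_neg (by omega), if_neg (by omega)]

lemma th_succ (τ r : ℕ → ℝ) (n m : ℕ) :
    th τ r n (m + 1) =
      -(1 / bk τ r (n - (m + 1)) 0) * (th τ r n m * bk τ r (n - m) 1) := by
  rw [th]
  congr 1
  rw [Finset.sum_attach (Finset.range (m + 1))
    (fun i => th τ r n i * bk τ r (n - i) (m + 1 - i))]
  rw [Finset.sum_eq_single m]
  · simp
  · intro b hb hbm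
    have hb' : b < m + 1 := Finset.mem_range.mp hb
    rw [bk_ge_two τ r _ _ (by omega), mul_zero]
  · intro h; exact absurd (Finset.self_mem_range_succ m) h

theorem stmt4 (N : ℕ) (τ r : ℕ → ℝ)
    (hτ : ∀ k, 1 ≤ k → k ≤ N → 0 < τ k)
    (hr1 : r 1 = 0)
    (hr : ∀ k, 2 ≤ k → k ≤ N → r k = τ k / τ (k - 1))
    (hratio : ∀ k, 2 ≤ k → k ≤ N → 0 < r k ∧ r k < (3 + Real.sqrt 17) / 2)
    (n j : ℕ) (hj1 : 1 ≤ j) (hjn : j ≤ n) (hnN : n ≤ N) :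
    0 < th τ r n (n - j) ∧
      th τ r n (n - j) =
        (1 / bk τ r j 0) * ∏ i ∈ Finset.Icc (j + 1) n, (r i) ^ 2 / (1 + 2 * r i) := by
  have hrpos : ∀ k, 2 ≤ k → k ≤ N → 0 < r k := fun k h1 h2 => (hratio k h1 h2).1
  have hrnonneg : ∀ k, 1 ≤ k → k ≤ N → 0 ≤ r k := by
    intro k h1 h2
    rcases eq_or_lt_of_le h1 with h | h
    · rw [← h, hr1]
    · exact le_of_lt (hrpos k h h2)
  have hbk : ∀ k, 1 ≤ k → k ≤ N → 0 < bk τ r k 0 := by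
    intro k h1 h2
    have h3 := hτ k h1 h2
    have h4 := hrnonneg k h1 h2
    unfold bk
    rw [if_pos rfl]
    positivity
  have heq : ∀ d jj, 1 ≤ jj → jj + d = n →
      th τ r n d = (1 / bk τ r jj 0) * ∏ i ∈ Finset.Icc (jj + 1) n, (r i) ^ 2 / (1 + 2 * r i) := by
    intro d
    induction d with
    | zero =>
      intro jj hjj1 hjjd
      have : jj = n := by omega
      subst this
      rw [Finset.Icc_eq_empty (by omega), Finset.prod_empty, mul_one, th]
    | succ d ih =>
      intro jj hjj1 hjjd
      have h1 : n - (d + 1) = jj := by omega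
      have h2 : n - d = jj + 1 := by omega
      have hjn' : jj + 1 ≤ n := by omega
      rw [th_succ, h1, h2, ih (jj + 1) (by omega) (by omega)]
      have hτp := hτ (jj + 1) (by omega) (by omega)
      have hrp := hrpos (jj + 1) (by omega) (by omega)
      have hprod : ∏ i ∈ Finset.Icc (jj + 1) n, (r i) ^ 2 / (1 + 2 * r i) =
          ((r (jj + 1)) ^ 2 / (1 + 2 * r (jj + 1))) *
            ∏ i ∈ Finset.Icc (jj + 2) n, (r i) ^ 2 / (1 + 2 * r i) := by
        rw [← Finset.Ico_add_one_right_eq_Icc, ← Finset.Ico_add_one_right_eq_Icc,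
          Finset.prod_eq_prod_Ico_succ_bot (by omega)]
      rw [hprod]
      have hkey : -(bk τ r (jj + 1) 1 / bk τ r (jj + 1) 0) =
          r (jj + 1) ^ 2 / (1 + 2 * r (jj + 1)) := by
        unfold bk
        rw [if_neg (by norm_num : (1:ℕ) ≠ 0), if_pos rfl, if_pos rfl]
        have h3 : τ (jj + 1) * (1 + r (jj + 1)) ≠ 0 := by positivity
        have h4 : (1 + 2 * r (jj + 1)) ≠ 0 := by positivity
        field_simp
      rw [← hkey]
      ring
  have hE := heq (n - j) j hj1 (by omega)
  refine ⟨?_, hE⟩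
  rw [hE]
  have hprodpos : 0 < ∏ i ∈ Finset.Icc (j + 1) n, (r i) ^ 2 / (1 + 2 * r i) := by
    apply Finset.prod_pos
    intro i hi
    rw [Finset.mem_Icc] at hi
    have := hrpos i (by omega) (by omega)
    positivity
  have := hbk j hj1 (by omega)
  positivity
end

section
/- Let 2 ≤ n ≤ N−1 and assume the step ratios satisfy 0 < r_k < (3+√17)/2 for 2 ≤ k ≤ N. Then the DOC kernels are positive definite: for any real numbers w_1, …, w_n, not all zero, one has Σ_{k=1}^{n} w_k Σ_{j=1}^{k} θ_{k−j}^{(k)} w_j > 0. -/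
open Finset

lemma bk_ge2 (τ r : ℕ → ℝ) (n j : ℕ) (hj : 2 ≤ j) : bk τ r n j = 0 := by
  unfold bk; rw [if_neg (by omega), if_neg (by omega)]

lemma star (τ r : ℕ → ℝ) (N : ℕ)
    (hb0 : ∀ k, 1 ≤ k → k ≤ N → bk τ r k 0 ≠ 0) :
    ∀ m k i, 1 ≤ i → i + m + 1 = k → k ≤ N →
      bk τ r k 0 * th τ r k (m + 1) = -(bk τ r k 1 * th τ r (k - 1) m) := by
  intro m
  induction m with
  | zero =>
    intro k i hi hk hkN
    rw [th_succ]
    have e1 : k - 1 = i := by omega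
    have e2 : k - 0 = k := by omega
    rw [e1, e2, th, th]
    have h1 : bk τ r k 0 ≠ 0 := hb0 k (by omega) hkN
    rw [show bk τ r k 0 * (-(1 / bk τ r i 0) * (1 / bk τ r k 0 * bk τ r k 1))
        = -((bk τ r k 0 / bk τ r k 0) * (bk τ r k 1 / bk τ r i 0)) from by ring,
      div_self h1]
    ring
  | succ m ih =>
    intro k i hi hk hkN
    have ihh := ih k (i + 1) (by omega) (by omega) hkN
    conv_lhs => rw [th_succ]
    conv_rhs => rw [th_succ]
    have e1 : k - (m + 1 + 1) = i := by omega
    have e2 : k - (m + 1) = i + 1 := by omega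
    have e3 : k - 1 - (m + 1) = i := by omega
    have e4 : k - 1 - m = i + 1 := by omega
    rw [e1, e2, e3, e4]
    have : bk τ r k 0 * (-(1 / bk τ r i 0) * (th τ r k (m + 1) * bk τ r (i+1) 1))
        = -(1 / bk τ r i 0) * (bk τ r k 0 * th τ r k (m + 1)) * bk τ r (i+1) 1 := by ring
    rw [this, ihh]
    ring

lemma bk0_eq (τ r : ℕ → ℝ) (k : ℕ) : bk τ r k 0 = (1 + 2 * r k) / (τ k * (1 + r k)) := by
  simp [bk]

lemma bk1_eq (τ r : ℕ → ℝ) (k : ℕ) : bk τ r k 1 = -(r k) ^ 2 / (τ k * (1 + r k)) := by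
  simp [bk]

lemma posB (s ρ : ℝ) (hρ : ρ^2 = 3*ρ+2) (hρ3 : 3 < ρ)
    (hs0 : 0 ≤ s) (hs : s < ρ) : 0 < 2 + 4*s - s^2 := by
  have hρ4 : ρ < 4 := by nlinarith
  nlinarith [mul_nonneg hs0 (show (0:ℝ) ≤ 4 - s by linarith)]

lemma posA (s t ρ : ℝ) (hρ : ρ^2 = 3*ρ+2) (hρ3 : 3 < ρ)
    (hs0 : 0 ≤ s) (hs : s < ρ) (ht0 : 0 < t) (ht : t < ρ) :
    t*(1+s) < (2+4*s-s^2)*(1+t) := by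
  have key : ρ*(1+ρ)*((2+4*s-s^2)*(1+t) - t*(1+s))
      = (1+t)*(ρ-s)*(ρ*(1+ρ)*s + (2+ρ)) + ρ*(1+s)*(ρ-t) := by
    linear_combination (-(1+t)*s*(ρ+1)) * hρ
  have h1 : 0 < (1+t)*(ρ-s)*(ρ*(1+ρ)*s + (2+ρ)) := by
    have : 0 < ρ*(1+ρ)*s + (2+ρ) := by nlinarith
    have h2 : 0 < (1+t)*(ρ-s) := by nlinarith
    exact mul_pos h2 this
  have h2 : 0 < ρ*(1+s)*(ρ-t) :=
    mul_pos (mul_pos (by linarith) (by linarith)) (by linarith)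
  have h3 : 0 < ρ*(1+ρ)*((2+4*s-s^2)*(1+t) - t*(1+s)) := by rw [key]; linarith
  have ha : 0 < ρ*(1+ρ) := by nlinarith
  by_contra hP
  push_neg at hP
  exact absurd h3 (not_lt.2 (mul_nonpos_of_nonneg_of_nonpos ha.le (by linarith)))

lemma rho_prop : ((3 + Real.sqrt 17)/2)^2 = 3*((3 + Real.sqrt 17)/2)+2 ∧ 3 < (3 + Real.sqrt 17)/2 := by
  have h : Real.sqrt 17 ^ 2 = 17 := Real.sq_sqrt (by norm_num)
  have h4 : 3 < Real.sqrt 17 := by nlinarith [Real.sqrt_nonneg 17]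
  constructor
  · field_simp
    linarith [h]
  · linarith

lemma sum_Icc_one (f : ℕ → ℝ) (n : ℕ) :
    ∑ k ∈ Finset.Icc 1 n, f k = ∑ j ∈ Finset.range n, f (j+1) := by
  induction n with
  | zero => simp
  | succ n ih => rw [Finset.sum_Icc_succ_top (by omega), ih, Finset.sum_range_succ]

lemma quad (N : ℕ) (τ r : ℕ → ℝ)
    (hτ : ∀ k, 1 ≤ k → k ≤ N → 0 < τ k)
    (hr1 : r 1 = 0)
    (hr : ∀ k, 2 ≤ k → k ≤ N → r k = τ k / τ (k - 1))
    (hratio : ∀ k, 2 ≤ k → k ≤ N → 0 < r k ∧ r k < (3 + Real.sqrt 17) / 2)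
    (n : ℕ) (hn1 : 1 ≤ n) (hnN : n + 1 ≤ N) (v : ℕ → ℝ) (hv0 : v 0 = 0)
    (hvne : ∃ k ∈ Finset.Icc 1 n, v k ≠ 0) :
    0 < ∑ k ∈ Finset.Icc 1 n, (bk τ r k 0 * v k + bk τ r k 1 * v (k - 1)) * v k := by
  set ρ : ℝ := (3 + Real.sqrt 17)/2 with hρdef
  obtain ⟨hρ, hρ3⟩ := rho_prop
  -- basic facts about r
  have hrk : ∀ k, 1 ≤ k → k ≤ N → 0 ≤ r k ∧ r k < ρ := by
    intro k h1 h2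
    rcases eq_or_lt_of_le h1 with h | h
    · rw [← h, hr1]; exact ⟨le_refl 0, by linarith⟩
    · obtain ⟨a, b⟩ := hratio k h h2; exact ⟨a.le, b⟩
  -- nonpositivity of bk _ 1
  have hb1 : ∀ k, 1 ≤ k → k ≤ N → bk τ r k 1 ≤ 0 := by
    intro k h1 h2
    rw [bk1_eq]
    have hτk := hτ k h1 h2
    have := (hrk k h1 h2).1
    apply div_nonpos_of_nonpos_of_nonneg
    · nlinarith [sq_nonneg (r k)]
    · nlinarith
  -- the coefficients
  set D : ℕ → ℝ := fun k =>
    2 * bk τ r k 0 + bk τ r k 1 + (if k < n then bk τ r (k+1) 1 else 0) with hDdef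
  have hD : ∀ k, 1 ≤ k → k ≤ n → 0 < D k := by
    intro k h1 h2
    have hkN : k ≤ N := by omega
    have hτk := hτ k h1 hkN
    have hs0 := (hrk k h1 hkN).1
    have hsρ := (hrk k h1 hkN).2
    have hs1 : (0:ℝ) < 1 + r k := by linarith
    by_cases hkn : k < n
    · -- interior: use posA
      have hk1N : k + 1 ≤ N := by omega
      have ht0 := (hratio (k+1) (by omega) hk1N).1
      have htρ := (hratio (k+1) (by omega) hk1N).2
      have ht1 : (0:ℝ) < 1 + r (k+1) := by linarith
      have hteq : τ (k+1) = r (k+1) * τ k := by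
        have := hr (k+1) (by omega) hk1N
        simp only [Nat.add_sub_cancel] at this
        rw [this]; field_simp
      have he : D k = ((2+4*r k-(r k)^2)*(1+r (k+1)) - r (k+1)*(1+r k))
          / (τ k * (1 + r k) * (1 + r (k+1))) := by
        simp only [hDdef, if_pos hkn, bk0_eq, bk1_eq, hteq]
        field_simp
        ring
      rw [he]
      apply div_pos
      · have := posA (r k) (r (k+1)) ρ hρ hρ3 hs0 hsρ ht0 htρ
        linarith
      · positivity
    · -- boundary: use posB
      have he : D k = (2 + 4*r k - (r k)^2) / (τ k * (1 + r k)) := by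
        simp only [hDdef, if_neg hkn, bk0_eq, bk1_eq]
        field_simp
        ring
      rw [he]
      apply div_pos
      · exact posB (r k) ρ hρ hρ3 hs0 hsρ
      · positivity
  -- pointwise lower bound
  have hpt : ∀ k ∈ Finset.Icc 1 n,
      2 * bk τ r k 0 * (v k)^2 + bk τ r k 1 * (v k)^2 + bk τ r k 1 * (v (k-1))^2
        ≤ 2 * ((bk τ r k 0 * v k + bk τ r k 1 * v (k-1)) * v k) := by
    intro k hk
    rw [Finset.mem_Icc] at hk
    have hb1k := hb1 k hk.1 (by omega)
    nlinarith [sq_nonneg (v k - v (k-1)), mul_nonneg (neg_nonneg.2 hb1k) (sq_nonneg (v k - v (k-1)))]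
  have hsum1 : ∑ k ∈ Finset.Icc 1 n,
      (2 * bk τ r k 0 * (v k)^2 + bk τ r k 1 * (v k)^2 + bk τ r k 1 * (v (k-1))^2)
      ≤ ∑ k ∈ Finset.Icc 1 n, 2 * ((bk τ r k 0 * v k + bk τ r k 1 * v (k-1)) * v k) :=
    Finset.sum_le_sum hpt
  -- shift identity
  obtain ⟨m, rfl⟩ : ∃ m, n = m + 1 := ⟨n - 1, by omega⟩
  have hshift : ∑ k ∈ Finset.Icc 1 (m+1), bk τ r k 1 * (v (k-1))^2
      = ∑ k ∈ Finset.Icc 1 (m+1), (if k < m+1 then bk τ r (k+1) 1 else 0) * (v k)^2 := by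
    rw [sum_Icc_one (fun k => bk τ r k 1 * (v (k-1))^2),
      sum_Icc_one (fun k => (if k < m+1 then bk τ r (k+1) 1 else 0) * (v k)^2)]
    rw [Finset.sum_range_succ' (fun j => bk τ r (j+1) 1 * (v (j+1-1))^2) m]
    rw [Finset.sum_range_succ (fun j => (if j+1 < m+1 then bk τ r (j+1+1) 1 else 0) * (v (j+1))^2) m]
    simp only [Nat.add_sub_cancel, hv0]
    norm_num
    apply Finset.sum_congr rfl
    intro j hj
    rw [Finset.mem_range] at hj
    rw [if_pos (by omega)]
  -- assemble
  have hsum2 : ∑ k ∈ Finset.Icc 1 (m+1), D k * (v k)^2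
      ≤ 2 * ∑ k ∈ Finset.Icc 1 (m+1), (bk τ r k 0 * v k + bk τ r k 1 * v (k-1)) * v k := by
    rw [Finset.mul_sum]
    calc ∑ k ∈ Finset.Icc 1 (m+1), D k * (v k)^2
        = ∑ k ∈ Finset.Icc 1 (m+1),
            (2 * bk τ r k 0 * (v k)^2 + bk τ r k 1 * (v k)^2 + bk τ r k 1 * (v (k-1))^2) := by
          rw [Finset.sum_congr rfl (fun k _ => by rw [hDdef]; ring_nf : ∀ k ∈ Finset.Icc 1 (m+1),
            D k * (v k)^2 = (2 * bk τ r k 0 + bk τ r k 1) * (v k)^2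
              + (if k < m+1 then bk τ r (k+1) 1 else 0) * (v k)^2)]
          rw [Finset.sum_add_distrib, ← hshift, ← Finset.sum_add_distrib]
          apply Finset.sum_congr rfl
          intro k _
          ring
      _ ≤ _ := hsum1
  have hpos : 0 < ∑ k ∈ Finset.Icc 1 (m+1), D k * (v k)^2 := by
    obtain ⟨k0, hk0, hvk0⟩ := hvne
    refine Finset.sum_pos' (fun k hk => ?_) ⟨k0, hk0, ?_⟩
    · rw [Finset.mem_Icc] at hk
      exact mul_nonneg (hD k hk.1 hk.2).le (sq_nonneg _)
    · rw [Finset.mem_Icc] at hk0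
      exact mul_pos (hD k0 hk0.1 hk0.2) (sq_pos_of_ne_zero hvk0)
  linarith


theorem stmt6 (N : ℕ) (τ r : ℕ → ℝ)
    (hτ : ∀ k, 1 ≤ k → k ≤ N → 0 < τ k)
    (hr1 : r 1 = 0)
    (hr : ∀ k, 2 ≤ k → k ≤ N → r k = τ k / τ (k - 1))
    (hratio : ∀ k, 2 ≤ k → k ≤ N → 0 < r k ∧ r k < (3 + Real.sqrt 17) / 2)
    (n : ℕ) (hn2 : 2 ≤ n) (hnN : n + 1 ≤ N)
    (w : ℕ → ℝ) (hw : ∃ k ∈ Finset.Icc 1 n, w k ≠ 0) :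
    0 < ∑ k ∈ Finset.Icc 1 n, w k * ∑ j ∈ Finset.Icc 1 k, th τ r k (k - j) * w j := by
  have hρ3 := rho_prop.2
  have hrk : ∀ k, 1 ≤ k → k ≤ N → 0 ≤ r k := by
    intro k h1 h2
    rcases eq_or_lt_of_le h1 with h | h
    · rw [← h, hr1]
    · exact (hratio k h h2).1.le
  have hb0pos : ∀ k, 1 ≤ k → k ≤ N → 0 < bk τ r k 0 := by
    intro k h1 h2
    rw [bk0_eq]
    have := hτ k h1 h2
    have := hrk k h1 h2
    apply div_pos <;> nlinarith
  have hb0ne : ∀ k, 1 ≤ k → k ≤ N → bk τ r k 0 ≠ 0 := fun k h1 h2 => (hb0pos k h1 h2).ne'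
  set v : ℕ → ℝ := fun j => ∑ i ∈ Finset.Icc 1 j, th τ r j (j - i) * w i with hvdef
  have hv0 : v 0 = 0 := by simp [hvdef]
  -- the orthogonality identity
  have key : ∀ k, 1 ≤ k → k ≤ n → bk τ r k 0 * v k + bk τ r k 1 * v (k - 1) = w k := by
    intro k hk1 hkn
    obtain ⟨p, rfl⟩ : ∃ p, k = p + 1 := ⟨k - 1, by omega⟩
    have hkN : p + 1 ≤ N := by omega
    simp only [Nat.add_sub_cancel]
    have hv : v (p+1) = (∑ i ∈ Finset.Icc 1 p, th τ r (p+1) (p+1-i) * w i)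
        + th τ r (p+1) 0 * w (p+1) := by
      simp only [hvdef]
      rw [Finset.sum_Icc_succ_top (by omega)]
      simp
    have hvp : v p = ∑ i ∈ Finset.Icc 1 p, th τ r p (p-i) * w i := by rw [hvdef]
    have hzero : ∑ i ∈ Finset.Icc 1 p, bk τ r (p+1) 0 * (th τ r (p+1) (p+1-i) * w i)
        + ∑ i ∈ Finset.Icc 1 p, bk τ r (p+1) 1 * (th τ r p (p-i) * w i) = 0 := by
      rw [← Finset.sum_add_distrib]
      apply Finset.sum_eq_zero
      intro i hi
      rw [Finset.mem_Icc] at hi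
      have hst := star τ r N hb0ne (p - i) (p+1) i hi.1 (by omega) hkN
      simp only [Nat.add_sub_cancel] at hst
      have e : p + 1 - i = (p - i) + 1 := by omega
      rw [e]
      have hfac : bk τ r (p+1) 0 * (th τ r (p+1) ((p-i)+1) * w i)
          + bk τ r (p+1) 1 * (th τ r p (p-i) * w i)
          = (bk τ r (p+1) 0 * th τ r (p+1) ((p-i)+1) + bk τ r (p+1) 1 * th τ r p (p-i)) * w i := by
        ring
      rw [hfac, hst]
      ring
    rw [hv, hvp, mul_add, Finset.mul_sum, Finset.mul_sum]
    have h2 : bk τ r (p+1) 0 * (th τ r (p+1) 0 * w (p+1)) = w (p+1) := by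
      rw [th, show bk τ r (p+1) 0 * (1 / bk τ r (p+1) 0 * w (p+1))
        = (bk τ r (p+1) 0 / bk τ r (p+1) 0) * w (p+1) from by ring,
        div_self (hb0ne (p+1) (by omega) hkN), one_mul]
    rw [h2]
    linarith [hzero]
  -- rewrite the target sum
  have hrw : ∑ k ∈ Finset.Icc 1 n, w k * ∑ j ∈ Finset.Icc 1 k, th τ r k (k - j) * w j
      = ∑ k ∈ Finset.Icc 1 n, (bk τ r k 0 * v k + bk τ r k 1 * v (k - 1)) * v k := by
    apply Finset.sum_congr rfl
    intro k hk
    rw [Finset.mem_Icc] at hk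
    rw [show (∑ j ∈ Finset.Icc 1 k, th τ r k (k - j) * w j) = v k from by rw [hvdef],
      key k hk.1 hk.2]
  rw [hrw]
  -- not all v are zero
  have hvne : ∃ k ∈ Finset.Icc 1 n, v k ≠ 0 := by
    by_contra hc
    push_neg at hc
    obtain ⟨k0, hk0, hwk0⟩ := hw
    rw [Finset.mem_Icc] at hk0
    apply hwk0
    rw [← key k0 hk0.1 hk0.2]
    have h1 : v k0 = 0 := hc k0 (Finset.mem_Icc.mpr hk0)
    have h2 : v (k0 - 1) = 0 := by
      rcases Nat.eq_or_lt_of_le hk0.1 with h | h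
      · rw [← h]; exact hv0
      · exact hc (k0 - 1) (Finset.mem_Icc.mpr (by omega))
    rw [h1, h2]
    ring
  exact quad N τ r hτ hr1 hr hratio n (by omega) hnN v hv0 hvne
end

section
/- For any vectors v, w ∈ ℝ² there exists a symmetric 2×2 real matrix Q such that f(v) − f(w) = Q (v − w) and every eigenvalue λ of Q satisfies −1/8 ≤ λ ≤ 1 (equivalently, −(1/8)|x|² ≤ xᵀQx ≤ |x|² for all x ∈ ℝ²). Consequently, |f(v) − f(w)| ≤ |v − w| for all v, w ∈ ℝ². -/
open Finset Matrix

lemma qf_lower (A B p q x0 x1 : ℝ) (hA : 0 < A) (hB : 0 < B)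
    (key : 4*(p^2+q^2) ≤ A*B + 4*(A+B)) :
    -(1/8 * (x0^2 + x1^2)) ≤
      x0 * ((A + B - p * p) / (2*A*B) * x0 + -(p * q) / (2*A*B) * x1) +
        x1 * (-(q * p) / (2*A*B) * x0 + (A + B - q * q) / (2*A*B) * x1) := by
  rw [← sub_nonneg]
  have hid : x0 * ((A + B - p * p) / (2*A*B) * x0 + -(p * q) / (2*A*B) * x1) +
        x1 * (-(q * p) / (2*A*B) * x0 + (A + B - q * q) / (2*A*B) * x1) -
        -(1/8 * (x0^2 + x1^2)) =
      ((A*B + 4*(A+B))*(x0^2+x1^2) - 4*(p*x0+q*x1)^2) / (8*A*B) := by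
    field_simp
    ring
  rw [hid]
  apply div_nonneg _ (by positivity)
  nlinarith [sq_nonneg (p*x1 - q*x0),
    mul_nonneg (sub_nonneg.2 key) (by positivity : (0:ℝ) ≤ x0^2+x1^2)]

lemma qf_upper (A B p q x0 x1 : ℝ) (hA : 1 ≤ A) (hB : 1 ≤ B) :
      x0 * ((A + B - p * p) / (2*A*B) * x0 + -(p * q) / (2*A*B) * x1) +
        x1 * (-(q * p) / (2*A*B) * x0 + (A + B - q * q) / (2*A*B) * x1) ≤
      x0^2 + x1^2 := by
  have hA0 : (0:ℝ) < A := lt_of_lt_of_le one_pos hA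
  have hB0 : (0:ℝ) < B := lt_of_lt_of_le one_pos hB
  rw [← sub_nonneg]
  have hid : x0^2 + x1^2 -
      (x0 * ((A + B - p * p) / (2*A*B) * x0 + -(p * q) / (2*A*B) * x1) +
        x1 * (-(q * p) / (2*A*B) * x0 + (A + B - q * q) / (2*A*B) * x1)) =
      ((2*A*B - (A+B))*(x0^2+x1^2) + (p*x0+q*x1)^2) / (2*A*B) := by
    field_simp
    ring
  rw [hid]
  apply div_nonneg _ (by positivity)
  nlinarith [sq_nonneg (p*x0+q*x1),
    mul_nonneg (mul_nonneg (sub_nonneg.2 hA) (sub_nonneg.2 hB))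
      (by positivity : (0:ℝ) ≤ x0^2+x1^2),
    mul_nonneg (mul_nonneg (sub_nonneg.2 hA) hB0.le)
      (by positivity : (0:ℝ) ≤ x0^2+x1^2)]

lemma contr (v0 v1 w0 w1 : ℝ) :
    (v0/(1+(v0^2+v1^2)) - w0/(1+(w0^2+w1^2)))^2 +
      (v1/(1+(v0^2+v1^2)) - w1/(1+(w0^2+w1^2)))^2 ≤
      (v0-w0)^2 + (v1-w1)^2 := by
  set A : ℝ := 1+(v0^2+v1^2) with hA
  set B : ℝ := 1+(w0^2+w1^2) with hB
  have hA0 : (0:ℝ) < A := by positivity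
  have hB0 : (0:ℝ) < B := by positivity
  have e0 : v0/A - w0/B = (B*v0 - A*w0)/(A*B) := by field_simp
  have e1 : v1/A - w1/B = (B*v1 - A*w1)/(A*B) := by field_simp
  rw [e0, e1, div_pow, div_pow, ← add_div, div_le_iff₀ (by positivity)]
  rw [hA, hB]
  linarith [mul_nonneg
      (mul_nonneg
        (by nlinarith [sq_nonneg (v0-w0), sq_nonneg (v1-w1), sq_nonneg (v0*w1-v1*w0), sq_nonneg (v0*w0+v1*w1-1)] :
          (0:ℝ) ≤ 2*(1+(v0^2+v1^2))*(1+(w0^2+w1^2)) - ((1+(v0^2+v1^2))+(1+(w0^2+w1^2))))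
        (by positivity : (0:ℝ) ≤ 2*(1+(v0^2+v1^2))*(1+(w0^2+w1^2)) + ((1+(v0^2+v1^2))+(1+(w0^2+w1^2)))))
      (by positivity : (0:ℝ) ≤ (v0-w0)^2+(v1-w1)^2),
    mul_nonneg
      (by nlinarith [sq_nonneg (v0-w0), sq_nonneg (v1-w1)] :
        (0:ℝ) ≤ 2*((1+(v0^2+v1^2))+(1+(w0^2+w1^2))) - ((v0+w0)^2+(v1+w1)^2))
      (sq_nonneg ((v0+w0)*(v0-w0) + (v1+w1)*(v1-w1)))]

/-- The nonlinear force vector `f(u) := u/(1+|u|²)` for `u ∈ ℝ²`. -/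
noncomputable def fvec (u : Fin 2 → ℝ) : Fin 2 → ℝ :=
  fun i => u i / (1 + ∑ j, (u j) ^ 2)

theorem stmt9 (v w : Fin 2 → ℝ) :
    (∃ Q : Matrix (Fin 2) (Fin 2) ℝ, Q.IsSymm ∧
      fvec v - fvec w = Q.mulVec (v - w) ∧
      ∀ x : Fin 2 → ℝ,
        -(1 / 8) * ∑ i, (x i) ^ 2 ≤ ∑ i, x i * Q.mulVec x i ∧
          ∑ i, x i * Q.mulVec x i ≤ ∑ i, (x i) ^ 2) ∧
    Real.sqrt (∑ i, (fvec v i - fvec w i) ^ 2) ≤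
      Real.sqrt (∑ i, (v i - w i) ^ 2) := by
  have ha : (0:ℝ) < 1 + (v 0 ^ 2 + v 1 ^ 2) := by positivity
  have hb : (0:ℝ) < 1 + (w 0 ^ 2 + w 1 ^ 2) := by positivity
  set a : ℝ := 1 + (v 0 ^ 2 + v 1 ^ 2) with ha'
  set b : ℝ := 1 + (w 0 ^ 2 + w 1 ^ 2) with hb'
  have ha1 : (1:ℝ) ≤ a := by nlinarith [sq_nonneg (v 0), sq_nonneg (v 1)]
  have hb1 : (1:ℝ) ≤ b := by nlinarith [sq_nonneg (w 0), sq_nonneg (w 1)]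
  have key : 4*((v 0 + w 0)^2 + (v 1 + w 1)^2) ≤ a*b + 4*(a+b) := by
    rw [ha', hb']
    nlinarith [sq_nonneg (v 0 - w 0), sq_nonneg (v 1 - w 1),
      sq_nonneg (v 0 * w 1 - v 1 * w 0), sq_nonneg (v 0 * w 0 + v 1 * w 1 - 3)]
  set Q : Matrix (Fin 2) (Fin 2) ℝ :=
    Matrix.of fun i j =>
      ((if i = j then a + b else 0) - (v i + w i) * (v j + w j)) / (2*a*b) with hQ
  refine ⟨⟨Q, ?_, ?_, fun x => ⟨?_, ?_⟩⟩, ?_⟩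
  · ext i j
    fin_cases i <;> fin_cases j <;> simp [hQ] <;> ring
  · funext i
    fin_cases i <;>
    · simp [fvec, Fin.sum_univ_two, hQ, Matrix.mulVec, dotProduct, ← ha', ← hb']
      field_simp
      ring
  · simp only [Fin.sum_univ_two, hQ, Matrix.mulVec, dotProduct, Matrix.of_apply]
    norm_num
    exact qf_lower a b (v 0 + w 0) (v 1 + w 1) (x 0) (x 1) ha hb key
  · simp only [Fin.sum_univ_two, hQ, Matrix.mulVec, dotProduct, Matrix.of_apply]
    norm_num
    exact qf_upper a b (v 0 + w 0) (v 1 + w 1) (x 0) (x 1) ha1 hb1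
  · apply Real.sqrt_le_sqrt
    simp only [Fin.sum_univ_two, fvec, ← ha', ← hb']
    exact contr (v 0) (v 1) (w 0) (w 1)
end

section
/- For any vectors u, v ∈ ℝ², one has 2(u − v)·u / (1 + |u|²) ≤ ln( (1 + |u|²)/(1 + |v|²) ) + |u − v|², where · denotes the Euclidean inner product and |·| the Euclidean norm on ℝ². -/
open Finset

theorem stmt13 (u v : Fin 2 → ℝ) :
    2 * (∑ i, (u i - v i) * u i) / (1 + ∑ i, (u i) ^ 2) ≤
      Real.log ((1 + ∑ i, (u i) ^ 2) / (1 + ∑ i, (v i) ^ 2))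
        + ∑ i, (u i - v i) ^ 2 := by
  set A : ℝ := 1 + ∑ i, (u i) ^ 2 with hAdef
  set B : ℝ := 1 + ∑ i, (v i) ^ 2 with hBdef
  set D : ℝ := ∑ i, (u i - v i) ^ 2 with hDdef
  have hA0 : (0:ℝ) < A := by positivity
  have hB0 : (0:ℝ) < B := by positivity
  have hA1 : (1:ℝ) ≤ A := le_add_of_nonneg_right (by positivity)
  have hD0 : (0:ℝ) ≤ D := by positivity
  have key : 2 * (∑ i, (u i - v i) * u i) = A - B + D := by
    simp only [hAdef, hBdef, hDdef, Fin.sum_univ_two]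
    ring
  have h1 : 1 - B / A ≤ Real.log (A / B) := by
    have h := Real.log_le_sub_one_of_pos (show 0 < B / A by positivity)
    rw [Real.log_div hB0.ne' hA0.ne'] at h
    rw [Real.log_div hA0.ne' hB0.ne']
    linarith
  have h2 : (A - B + D) / A = 1 - B / A + D / A := by
    field_simp
  have h3 : D / A ≤ D := div_le_self hD0 hA1
  rw [key, h2]
  linarith
end
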